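/- Let β_L, β_R > 0 and v ∈ (−1,1) with v ≠ 0. Then lim_{E→0⁺} [R(β_L, −v, E) + R(β_R, v, E)] = (√(1 − v²)/(4π v))·((1/β_R)·ln(1 + v) − (1/β_L)·ln(1 − v)). -/

import Mathlib

open MeasureTheory Real Filter Set

/-- The function `R(β, u, E)` appearing in the NESS transition rate. -/
noncomputable def Rfun (β u E : ℝ) : ℝ :=
  (Real.sqrt (1 - u ^ 2) / (4 * π * u * β)) *
    Real.log ((1 - Real.exp (-(β * Real.sqrt (1 - u ^ 2) * E))) /
      (1 - Real.exp (-(β * Real.sqrt ((1 - u) / (1 + u)) * E))))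

lemma slope_lim (a : ℝ) :
    Tendsto (fun E : ℝ => (1 - Real.exp (-(a * E))) / E) (nhdsWithin 0 (Set.Ioi 0)) (nhds a) := by
  have hd : HasDerivAt (fun E : ℝ => 1 - Real.exp (-(a * E))) a 0 := by
    have h1 : HasDerivAt (fun E : ℝ => -(a * E)) (-a) 0 := by
      simpa using ((hasDerivAt_id (0:ℝ)).const_mul a).fun_neg
    simpa using (hasDerivAt_const (0:ℝ) (1:ℝ)).fun_sub h1.exp
  have h4 : Tendsto (slope (fun E : ℝ => 1 - Real.exp (-(a * E))) 0)
      (nhdsWithin 0 (Set.Ioi 0)) (nhds a) :=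
    (hasDerivAt_iff_tendsto_slope.mp hd).mono_left
      (nhdsWithin_mono 0 (fun x hx => ne_of_gt hx))
  refine h4.congr' ?_
  filter_upwards [self_mem_nhdsWithin] with E hE
  simp [slope_def_field, div_eq_mul_inv, mul_comm]

lemma ratio_lim (a b : ℝ) (hb : b ≠ 0) :
    Tendsto (fun E : ℝ => (1 - Real.exp (-(a * E))) / (1 - Real.exp (-(b * E))))
      (nhdsWithin 0 (Set.Ioi 0)) (nhds (a / b)) := by
  refine ((slope_lim a).div (slope_lim b) hb).congr' ?_
  filter_upwards [self_mem_nhdsWithin] with E hE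
  have hE0 : E ≠ 0 := ne_of_gt hE
  rw [Pi.div_apply]
  field_simp

lemma sqrt_ratio (u : ℝ) (h1 : -1 < u) (h2 : u < 1) :
    Real.sqrt (1 - u ^ 2) / Real.sqrt ((1 - u) / (1 + u)) = 1 + u := by
  have hp : (0:ℝ) < 1 + u := by linarith
  have hm : (0:ℝ) < 1 - u := by linarith
  have h : (1:ℝ) - u ^ 2 = (1 - u) * (1 + u) := by ring
  have hsm : Real.sqrt (1 - u) ≠ 0 := by positivity
  rw [h, Real.sqrt_mul hm.le, Real.sqrt_div hm.le, div_div_eq_mul_div,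
    div_eq_iff hsm, mul_assoc, Real.mul_self_sqrt hp.le, mul_comm]

lemma Rfun_lim (β u : ℝ) (hβ : 0 < β) (h1 : -1 < u) (h2 : u < 1) :
    Tendsto (fun E : ℝ => Rfun β u E) (nhdsWithin 0 (Set.Ioi 0))
      (nhds ((Real.sqrt (1 - u ^ 2) / (4 * π * u * β)) * Real.log (1 + u))) := by
  have hp : (0:ℝ) < 1 + u := by linarith
  have hm : (0:ℝ) < 1 - u := by linarith
  set a := β * Real.sqrt (1 - u ^ 2) with ha
  set b := β * Real.sqrt ((1 - u) / (1 + u)) with hb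
  have hbpos : 0 < b := by
    apply mul_pos hβ
    apply Real.sqrt_pos.mpr
    positivity
  have hab : a / b = 1 + u := by
    rw [ha, hb, mul_div_mul_left _ _ (ne_of_gt hβ)]
    exact sqrt_ratio u h1 h2
  have hr := ratio_lim a b (ne_of_gt hbpos)
  rw [hab] at hr
  have hlog : Tendsto (fun E : ℝ =>
      Real.log ((1 - Real.exp (-(a * E))) / (1 - Real.exp (-(b * E)))))
      (nhdsWithin 0 (Set.Ioi 0)) (nhds (Real.log (1 + u))) :=
    (Real.continuousAt_log (ne_of_gt hp)).tendsto.comp hr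
  exact hlog.const_mul _

/-- Small-energy-gap limit of the NESS transition rate: for
`β_L, β_R > 0` and `v ∈ (−1,1)`, `v ≠ 0`,
`lim_{E→0⁺} [R(β_L, −v, E) + R(β_R, v, E)]
  = (√(1−v²)/(4πv))·((1/β_R)·ln(1+v) − (1/β_L)·ln(1−v))`. -/
theorem stmt12 (βL βR v : ℝ) (hL : 0 < βL) (hR : 0 < βR)
    (hv1 : -1 < v) (hv2 : v < 1) (hv0 : v ≠ 0) :
    Tendsto (fun E : ℝ => Rfun βL (-v) E + Rfun βR v E)
      (nhdsWithin 0 (Set.Ioi 0))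
      (nhds ((Real.sqrt (1 - v ^ 2) / (4 * π * v)) *
        ((1 / βR) * Real.log (1 + v) - (1 / βL) * Real.log (1 - v)))) := by
  have h1 := Rfun_lim βL (-v) hL (by linarith) (by linarith)
  have h2 := Rfun_lim βR v hR hv1 hv2
  have hsum := h1.add h2
  convert hsum using 2
  have hπ : (π : ℝ) ≠ 0 := Real.pi_ne_zero
  have hneg : (-v) ^ 2 = v ^ 2 := by ring
  rw [hneg]
  have h1v : (1 : ℝ) + -v = 1 - v := by ring
  rw [h1v]
  field_simp
  ring
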